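/- For l < m with i = (m - l) mod e ≠ 0, in the truncated Fock space the commutation relations imply: u_m ∧ u_l = -q·(u_l ∧ u_m) + (q^{-1} - q)·(u_{l+e} ∧ u_{m-e} + u_{l+2e} ∧ u_{m-2e} + … + u_{m-i} ∧ u_{l+i}). -/

import Mathlib

open scoped BigOperators

noncomputable section

abbrev K : Type := RatFunc ℚ

noncomputable def q : K := RatFunc.X

abbrev W (r : ℕ) : Type := (Fin r → ℕ) →₀ K

def fstIdx (e l m t : ℕ) : ℕ :=
  if t % 2 = 0 then m - (t / 2) * e - (m - l) % e else m - (t / 2 + 1) * e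

noncomputable def relElem (e l m : ℕ) : W 2 :=
  if (m - l) % e = 0 then
    Finsupp.single ![l, m] 1 + Finsupp.single ![m, l] 1
  else
    Finsupp.single ![l, m] 1 + q⁻¹ • Finsupp.single ![m, l] 1 -
      (q⁻¹ ^ 2 - 1) •
        ∑ t ∈ Finset.range (m - l),
          (if l + m < 2 * fstIdx e l m t then
            (-q⁻¹) ^ t • Finsupp.single ![fstIdx e l m t, l + m - fstIdx e l m t] (1 : K)
          else 0)

def relSet (e r : ℕ) : Set (W r) :=
  { x | ∃ (w : Fin r → ℕ) (p p' : Fin r), (p : ℕ) + 1 = (p' : ℕ) ∧ w p ≤ w p' ∧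
      x = Finsupp.mapDomain
            (fun v : Fin 2 → ℕ => Function.update (Function.update w p (v 0)) p' (v 1))
            (relElem e (w p) (w p')) }

def FockRel (e r : ℕ) : Submodule K (W r) := Submodule.span K (relSet e r)

abbrev Fock (e r : ℕ) : Type := W r ⧸ FockRel e r

def wedge (e r : ℕ) (w : Fin r → ℕ) : Fock e r :=
  Submodule.Quotient.mk (Finsupp.single w 1)

def StrictDec {r : ℕ} (w : Fin r → ℕ) : Prop := ∀ a b : Fin r, a < b → w b < w a

def betaTuple (r : ℕ) (f : ℕ → ℕ) : Fin r → ℕ := fun i => f i + (r - 1 - i)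

noncomputable def barK (x : K) : K :=
  Polynomial.eval₂ (algebraMap ℚ K) q⁻¹ x.num / Polynomial.eval₂ (algebraMap ℚ K) q⁻¹ x.denom

open Classical in
noncomputable def orderedRep (e r : ℕ) (x : W r) : W r :=
  if h : ∃ y : W r, (∀ t ∈ y.support, StrictDec t) ∧
      (Submodule.Quotient.mk y : Fock e r) = Submodule.Quotient.mk x
  then h.choose else 0

noncomputable def bcoef (e r : ℕ) (t : Fin r → ℕ) : K :=
  orderedRep e r (Finsupp.single (fun i => t i.rev) 1) t

noncomputable def barVec (e r : ℕ) (x : W r) : Fock e r :=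
  x.sum fun t c =>
    (barK c / bcoef e r t) •
      (Submodule.Quotient.mk (Finsupp.single (fun i : Fin r => t i.rev) 1) : Fock e r)

end


noncomputable section AuxProof

open Finset

/-- The sum appearing in `relElem`, pushed to the Fock space. -/
noncomputable def Tsum (e l m M : ℕ) : Fock e 2 :=
  ∑ t ∈ Finset.range M,
    (if l + m < 2 * fstIdx e l m t then
      (-q⁻¹) ^ t • wedge e 2 ![fstIdx e l m t, l + m - fstIdx e l m t]
    else 0)

lemma hq0 : (q : K) ≠ 0 := RatFunc.X_ne_zero

lemma wedge_congr (e : ℕ) {a b a' b' : ℕ} (h1 : a = a') (h2 : b = b') :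
    wedge e 2 ![a, b] = wedge e 2 ![a', b'] := by rw [h1, h2]

lemma fstIdx_even (e : ℕ) {t : ℕ} (h : t % 2 = 0) (l m : ℕ) :
    fstIdx e l m t = m - (t / 2 * e + (m - l) % e) := by
  rw [fstIdx, if_pos h, Nat.sub_sub]

lemma fstIdx_odd (e : ℕ) {t : ℕ} (h : t % 2 = 1) (l m : ℕ) :
    fstIdx e l m t = m - (t / 2 + 1) * e := by
  rw [fstIdx, if_neg (by omega)]

lemma mk_relElem (e l m : ℕ) (h : l ≤ m) :
    (Submodule.Quotient.mk (relElem e l m) : Fock e 2) = 0 := by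
  rw [Submodule.Quotient.mk_eq_zero]
  apply Submodule.subset_span
  refine ⟨![l, m], 0, 1, rfl, by simpa using h, ?_⟩
  have hF : (fun v : Fin 2 → ℕ =>
      Function.update (Function.update (![l, m] : Fin 2 → ℕ) 0 (v 0)) 1 (v 1)) = id := by
    funext v a
    fin_cases a <;> simp [Function.update]
  simp only [Matrix.cons_val_zero, Matrix.cons_val_one, Matrix.head_cons]
  rw [hF, Finsupp.mapDomain_id]

lemma flipW (e l m : ℕ) (hlm : l < m) (hi : (m - l) % e ≠ 0) :
    wedge e 2 ![m, l]
      = -q • wedge e 2 ![l, m] + (q⁻¹ - q) • Tsum e l m (m - l) := by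
  have h0 : (Submodule.Quotient.mk (relElem e l m) : Fock e 2) = 0 :=
    mk_relElem e l m hlm.le
  rw [relElem, if_neg hi, ← Submodule.mkQ_apply, map_sub, map_add, map_smul, map_smul,
    map_sum] at h0
  simp only [apply_ite ((FockRel e 2).mkQ), map_smul, map_zero, Submodule.mkQ_apply] at h0
  have hA : (Submodule.Quotient.mk (Finsupp.single ![l, m] (1 : K)) : Fock e 2)
      = wedge e 2 ![l, m] := rfl
  have hB : (Submodule.Quotient.mk (Finsupp.single ![m, l] (1 : K)) : Fock e 2)
      = wedge e 2 ![m, l] := rfl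
  rw [hA, hB] at h0
  have hT : (∑ t ∈ Finset.range (m - l),
      if l + m < 2 * fstIdx e l m t then
        (-q⁻¹) ^ t • (Submodule.Quotient.mk
          (Finsupp.single ![fstIdx e l m t, l + m - fstIdx e l m t] (1 : K)) : Fock e 2)
      else 0) = Tsum e l m (m - l) := rfl
  rw [hT] at h0
  rw [sub_eq_zero] at h0
  have h1 : q⁻¹ • wedge e 2 ![m, l]
      = (q⁻¹ ^ 2 - 1) • Tsum e l m (m - l) - wedge e 2 ![l, m] :=
    eq_sub_of_add_eq' h0
  calc wedge e 2 ![m, l] = q • (q⁻¹ • wedge e 2 ![m, l]) := by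
        rw [smul_smul, mul_inv_cancel₀ hq0, one_smul]
    _ = q • ((q⁻¹ ^ 2 - 1) • Tsum e l m (m - l) - wedge e 2 ![l, m]) := by rw [h1]
    _ = -q • wedge e 2 ![l, m] + (q⁻¹ - q) • Tsum e l m (m - l) := by
        rw [smul_sub, smul_smul,
          show q * (q⁻¹ ^ 2 - 1) = q⁻¹ - q from by
            rw [show q * (q⁻¹ ^ 2 - 1) = q * q⁻¹ * q⁻¹ - q from by ring,
              mul_inv_cancel₀ hq0, one_mul],
          sub_eq_neg_add, neg_smul]

lemma cond_lt (e : ℕ) (he : 1 ≤ e) {l m t : ℕ} (h : l + m < 2 * fstIdx e l m t) :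
    t < m - l := by
  rcases Nat.mod_two_eq_zero_or_one t with ht | ht
  · rw [fstIdx_even e ht] at h
    have h1 : t / 2 ≤ t / 2 * e := Nat.le_mul_of_pos_right _ (by omega)
    generalize t / 2 * e = B at h h1
    generalize (m - l) % e = i at h
    omega
  · rw [fstIdx_odd e ht] at h
    have h1 : t / 2 + 1 ≤ (t / 2 + 1) * e := Nat.le_mul_of_pos_right _ (by omega)
    generalize (t / 2 + 1) * e = B at h h1
    omega

lemma Tsum_trunc (e : ℕ) (he : 1 ≤ e) (l m M : ℕ) (h : m - l ≤ M) :
    Tsum e l m M = Tsum e l m (m - l) := by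
  refine (Finset.sum_subset (Finset.range_subset_range.2 h) ?_).symm
  intro t ht hnt
  rw [if_neg]
  intro hc
  exact hnt (Finset.mem_range.2 (cond_lt e he hc))

lemma combine {M : Type} [AddCommGroup M] [Module K M] (A S AN : M) :
    q⁻¹ ^ 2 • S + -q⁻¹ • (-q • A + (q⁻¹ - q) • S) + AN = S + A + AN := by
  have h1 : -q⁻¹ • (-q • A + (q⁻¹ - q) • S) = A + (1 - q⁻¹ ^ 2) • S := by
    rw [smul_add, smul_smul, smul_smul,
      show -q⁻¹ * -q = (1 : K) from by rw [neg_mul_neg, inv_mul_cancel₀ hq0],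
      show -q⁻¹ * (q⁻¹ - q) = q⁻¹ * q - q⁻¹ ^ 2 from by ring, inv_mul_cancel₀ hq0, one_smul]
  rw [h1]
  have h2 : q⁻¹ ^ 2 • S + (A + (1 - q⁻¹ ^ 2) • S) = S + A := by
    rw [add_comm A, ← add_assoc, ← add_smul,
      show q⁻¹ ^ 2 + (1 - q⁻¹ ^ 2) = (1 : K) from by ring, one_smul]
  rw [h2]

lemma key (e : ℕ) (he : 2 ≤ e) : ∀ d l m, m - l = d → l < m → (m - l) % e ≠ 0 →
    Tsum e l m (m - l)
      = ∑ j ∈ Finset.Icc 1 ((m - l) / e), wedge e 2 ![l + j * e, m - j * e] := by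
  intro d
  induction d using Nat.strong_induction_on with
  | _ d IH =>
  intro l m hd hlm hi
  have he0 : 0 < e := by omega
  have hie : (m - l) % e < e := Nat.mod_lt _ he0
  have hdm : e * ((m - l) / e) + (m - l) % e = m - l := Nat.div_add_mod _ _
  have hi' : 0 < (m - l) % e := Nat.pos_of_ne_zero hi
  by_cases hN0 : (m - l) / e = 0
  · -- empty case
    rw [hN0, mul_zero, zero_add] at hdm
    rw [hdm] at hie
    rw [hN0]
    rw [show Finset.Icc 1 0 = ∅ from rfl, Finset.sum_empty]
    apply Finset.sum_eq_zero
    intro t ht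
    rw [if_neg]
    intro hc
    rcases Nat.mod_two_eq_zero_or_one t with ht2 | ht2
    · rw [fstIdx_even e ht2, hdm] at hc
      generalize t / 2 * e = B at hc
      omega
    · rw [fstIdx_odd e ht2] at hc
      have h1 : e ≤ (t / 2 + 1) * e := Nat.le_mul_of_pos_left _ (by omega)
      generalize (t / 2 + 1) * e = B at hc h1
      omega
  by_cases hN1 : (m - l) / e = 1
  · -- single term
    rw [hN1, mul_one] at hdm
    rw [hN1, Finset.Icc_self, Finset.sum_singleton, Tsum]
    rw [Finset.sum_eq_single_of_mem 0 (Finset.mem_range.2 (by omega))]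
    · rw [fstIdx_even e (by norm_num) l m]
      norm_num
      rw [if_pos (by generalize (m - l) % e = i at hdm hie ⊢; omega)]
      exact wedge_congr e (by generalize (m - l) % e = i at hdm hie ⊢; omega)
        (by generalize (m - l) % e = i at hdm hie ⊢; omega)
    · intro t ht hne
      rw [if_neg]
      intro hc
      rcases Nat.mod_two_eq_zero_or_one t with ht2 | ht2
      · rw [fstIdx_even e ht2] at hc
        have h1 : e ≤ t / 2 * e := Nat.le_mul_of_pos_left _ (by omega)
        generalize t / 2 * e = B at hc h1
        generalize (m - l) % e = i at hc hdm hie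
        omega
      · rw [fstIdx_odd e ht2] at hc
        have h1 : e ≤ (t / 2 + 1) * e := Nat.le_mul_of_pos_left _ (by omega)
        generalize (t / 2 + 1) * e = B at hc h1
        generalize (m - l) % e = i at hdm hie
        omega
  -- main case N ≥ 2
  have hN2 : 2 ≤ (m - l) / e := (Nat.two_le_iff _).2 ⟨hN0, hN1⟩
  have h2e : 2 * e + (m - l) % e ≤ m - l := by
    have h := Nat.mul_le_mul_left e hN2
    generalize e * ((m - l) / e) = P at hdm h
    omega
  have hml : l + 2 * e < m := by
    generalize (m - l) % e = i at h2e hi'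
    omega
  have hd'eq : m - e - (l + e) = m - l - 2 * e := by omega
  have hsum2 : m - l - 2 * e + e * 2 = m - l := by
    generalize (m - l) % e = i at h2e hi'
    omega
  have hmod : (m - l - 2 * e) % e = (m - l) % e := by
    conv_rhs => rw [← hsum2]
    rw [Nat.add_mul_mod_self_left]
  have hNrw : (m - l) / e = (m - e - (l + e)) / e + 2 := by
    rw [hd'eq]
    conv_lhs => rw [← hsum2]
    rw [Nat.add_mul_div_left _ _ he0]
  have hIH := IH (m - l - 2 * e) (by omega) (l + e) (m - e)
    (by omega) (by omega) (by rw [hd'eq, hmod]; exact hi)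
  have hflip := flipW e (l + e) (m - e) (by omega) (by rw [hd'eq, hmod]; exact hi)
  rw [hIH] at hflip
  -- split the sum
  obtain ⟨d2, hd2⟩ : ∃ d2, m - l = d2 + 2 := ⟨m - l - 2, by omega⟩
  rw [Tsum, show Finset.range (m - l) = Finset.range (d2 + 2) from by rw [hd2]]
  rw [Finset.sum_range_succ', Finset.sum_range_succ']
  -- t = 0 term
  have hdm' : (m - l) / e * e + (m - l) % e = m - l := by rw [mul_comm]; exact hdm
  have hf0 : (if l + m < 2 * fstIdx e l m 0 then
        (-q⁻¹) ^ 0 • wedge e 2 ![fstIdx e l m 0, l + m - fstIdx e l m 0] else 0)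
      = wedge e 2 ![l + (m - l) / e * e, m - (m - l) / e * e] := by
    rw [fstIdx_even e (by norm_num) l m]
    norm_num
    rw [if_pos (by generalize (m - l) % e = i at hdm hie h2e ⊢; omega)]
    exact wedge_congr e
      (by generalize (m - l) / e * e = P at hdm' ⊢
          generalize (m - l) % e = i at hdm' hie ⊢
          omega)
      (by generalize (m - l) / e * e = P at hdm' ⊢
          generalize (m - l) % e = i at hdm' hie ⊢
          omega)
  -- t = 1 term
  have hf1 : (if l + m < 2 * fstIdx e l m (0 + 1) then
        (-q⁻¹) ^ (0 + 1) • wedge e 2 ![fstIdx e l m (0 + 1), l + m - fstIdx e l m (0 + 1)]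
      else 0)
      = -q⁻¹ • wedge e 2 ![m - e, l + e] := by
    rw [fstIdx_odd e (by norm_num) l m]
    norm_num
    rw [if_pos (by generalize (m - l) % e = i at h2e hi' ⊢; omega)]
    exact congrArg _ (congrArg _ (wedge_congr e rfl (by omega)))
  -- middle terms
  have hmid : ∀ t, (if l + m < 2 * fstIdx e l m (t + 1 + 1) then
        (-q⁻¹) ^ (t + 1 + 1) •
          wedge e 2 ![fstIdx e l m (t + 1 + 1), l + m - fstIdx e l m (t + 1 + 1)]
      else 0)
      = (q⁻¹ ^ 2 : K) • (if (l + e) + (m - e) < 2 * fstIdx e (l + e) (m - e) t then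
          (-q⁻¹) ^ t •
            wedge e 2 ![fstIdx e (l + e) (m - e) t, (l + e) + (m - e) - fstIdx e (l + e) (m - e) t]
        else 0) := by
    intro t
    have hshift : fstIdx e l m (t + 1 + 1) = fstIdx e (l + e) (m - e) t := by
      have hmm2 : m - e - (l + e) = m - l - 2 * e := hd'eq
      rcases Nat.mod_two_eq_zero_or_one t with ht2 | ht2
      · rw [fstIdx_even e (show (t + 1 + 1) % 2 = 0 by omega) l m,
          fstIdx_even e ht2 (l + e) (m - e), hmm2, hmod,
          show (t + 1 + 1) / 2 = t / 2 + 1 from by omega, Nat.sub_sub]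
        congr 1
        ring
      · rw [fstIdx_odd e (show (t + 1 + 1) % 2 = 1 by omega) l m,
          fstIdx_odd e ht2 (l + e) (m - e),
          show (t + 1 + 1) / 2 = t / 2 + 1 from by omega, Nat.sub_sub]
        congr 1
        ring
    have hlm2 : (l + e) + (m - e) = l + m := by omega
    rw [hshift, hlm2]
    split_ifs with hcond
    · rw [show t + 1 + 1 = t + 2 from rfl, pow_add, neg_sq, mul_comm, mul_smul]
    · rw [smul_zero]
  rw [Finset.sum_congr rfl (fun t _ => hmid t), ← Finset.smul_sum]
  have htr : (∑ t ∈ Finset.range d2,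
      (if (l + e) + (m - e) < 2 * fstIdx e (l + e) (m - e) t then
        (-q⁻¹) ^ t •
          wedge e 2 ![fstIdx e (l + e) (m - e) t, (l + e) + (m - e) - fstIdx e (l + e) (m - e) t]
      else 0)) = Tsum e (l + e) (m - e) (m - e - (l + e)) := by
    rw [show (∑ t ∈ Finset.range d2,
      (if (l + e) + (m - e) < 2 * fstIdx e (l + e) (m - e) t then
        (-q⁻¹) ^ t •
          wedge e 2 ![fstIdx e (l + e) (m - e) t, (l + e) + (m - e) - fstIdx e (l + e) (m - e) t]
      else 0)) = Tsum e (l + e) (m - e) d2 from rfl]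
    exact Tsum_trunc e (by omega) _ _ _ (by omega)
  rw [htr, hIH, hf0, hf1]
  -- now transform the RHS
  rw [hNrw]
  set N' := (m - e - (l + e)) / e with hN'
  have hR : (∑ j ∈ Finset.Icc 1 (N' + 2), wedge e 2 ![l + j * e, m - j * e])
      = (∑ t ∈ Finset.range N', wedge e 2 ![l + (t + 2) * e, m - (t + 2) * e])
        + wedge e 2 ![l + e, m - e] + wedge e 2 ![l + (N' + 2) * e, m - (N' + 2) * e] := by
    rw [← Finset.Ico_add_one_right_eq_Icc, Finset.sum_Ico_eq_sum_range]
    rw [show N' + 2 + 1 - 1 = N' + 2 from by omega]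
    rw [Finset.sum_range_succ, Finset.sum_range_succ']
    congr 1
    · congr 1
      · apply Finset.sum_congr rfl
        intro t _
        rw [show 1 + (t + 1) = t + 2 from by omega]
      · rw [show (1 + 0) * e = e from by omega]
    · rw [show 1 + (N' + 1) = N' + 2 from by omega]
  rw [hR]
  have hU : (∑ j ∈ Finset.Icc 1 N', wedge e 2 ![l + e + j * e, m - e - j * e])
      = ∑ t ∈ Finset.range N', wedge e 2 ![l + (t + 2) * e, m - (t + 2) * e] := by
    rw [← Finset.Ico_add_one_right_eq_Icc, Finset.sum_Ico_eq_sum_range]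
    rw [show N' + 1 - 1 = N' from by omega]
    apply Finset.sum_congr rfl
    intro t _
    refine wedge_congr e (by ring) ?_
    rw [Nat.sub_sub]
    congr 1
    ring
  rw [hflip, hU]
  exact combine _ _ _

end AuxProof

/-- for l < m with i = (m-l) mod e ≠ 0, in the truncated Fock space
u_m ∧ u_l = -q·(u_l ∧ u_m) + (q⁻¹ - q)·(u_{l+e} ∧ u_{m-e} + … + u_{m-i} ∧ u_{l+i}). -/
theorem stmt15 (e : ℕ) (he : 2 ≤ e) (l m : ℕ) (hlm : l < m)
    (hi : (m - l) % e ≠ 0) :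
    wedge e 2 ![m, l]
      = -q • wedge e 2 ![l, m]
        + (q⁻¹ - q) • ∑ j ∈ Finset.Icc 1 ((m - l - (m - l) % e) / e),
            wedge e 2 ![l + j * e, m - j * e] := by
  have hbound : (m - l - (m - l) % e) / e = (m - l) / e := by
    have h := Nat.div_add_mod (m - l) e
    have h1 : m - l - (m - l) % e = e * ((m - l) / e) := by
      generalize e * ((m - l) / e) = P at h ⊢
      generalize (m - l) % e = i at h ⊢
      omega
    rw [h1, Nat.mul_div_cancel_left _ (by omega : 0 < e)]
  rw [hbound, ← key e he (m - l) l m rfl hlm hi]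
  exact flipW e l m hlm hi
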